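/- Let κ be an integrable hyperkernel on a probability space (S, μ). Suppose there exist δ > 0 and a measurable f : S → [0,1] with μ{x : f(x) > 0} > 0 such that S_κ(f)(x) ≥ (1+δ)·f(x) for every x ∈ S. Then there exists a measurable g : S → [0,1] with Φ_κ(g) = g and ∫_S g dμ > 0. -/

import Mathlib

open MeasureTheory ENNReal Filter Topology

/-- The nonlinear operator `S_κ` associated to a hyperkernel `κ = (κ_r)_{r ≥ 2}`;
here `κ m` plays the role of `κ_{m+2}`. -/
noncomputable def Sop {S : Type*} [MeasurableSpace S] (μ : Measure S)
    (κ : (m : ℕ) → (Fin (m + 2) → S) → ℝ≥0∞) (f : S → ℝ) (x : S) : ℝ≥0∞ :=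
  ∑' m : ℕ, ((m : ℝ≥0∞) + 2) *
    ∫⁻ y : Fin (m + 1) → S,
      κ m (Fin.cons x y) * ENNReal.ofReal (1 - ∏ i, (1 - f (y i)))
      ∂(Measure.pi fun _ => μ)

/-- The edge kernel `κ_e` of a hyperkernel. -/
noncomputable def edgeKernel {S : Type*} [MeasurableSpace S] (μ : Measure S)
    (κ : (m : ℕ) → (Fin (m + 2) → S) → ℝ≥0∞) (x y : S) : ℝ≥0∞ :=
  ∑' m : ℕ, ((m : ℝ≥0∞) + 2) * ((m : ℝ≥0∞) + 1) *
    ∫⁻ z : Fin m → S, κ m (Fin.cons x (Fin.cons y z)) ∂(Measure.pi fun _ => μ)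

/-- The linear operator `T_κ`. -/
noncomputable def Tlin {S : Type*} [MeasurableSpace S] (μ : Measure S)
    (κ : (m : ℕ) → (Fin (m + 2) → S) → ℝ≥0∞) (f : S → ℝ) (x : S) : ℝ≥0∞ :=
  ∫⁻ y, edgeKernel μ κ x y * ENNReal.ofReal (f y) ∂μ

/-- All kernels of the family are measurable. -/
def HyperkernelMeasurable {S : Type*} [MeasurableSpace S]
    (κ : (m : ℕ) → (Fin (m + 2) → S) → ℝ≥0∞) : Prop :=
  ∀ m, Measurable (κ m)

/-- Each kernel is invariant under all permutations of its arguments. -/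
def HyperkernelSymm {S : Type*} [MeasurableSpace S]
    (κ : (m : ℕ) → (Fin (m + 2) → S) → ℝ≥0∞) : Prop :=
  ∀ m (σ : Equiv.Perm (Fin (m + 2))) (v : Fin (m + 2) → S), κ m (v ∘ σ) = κ m v

/-- Integrability of the hyperkernel: `∑_{r≥2} r ∫_{S^r} κ_r < ∞`. -/
def HyperkernelIntegrable {S : Type*} [MeasurableSpace S] (μ : Measure S)
    (κ : (m : ℕ) → (Fin (m + 2) → S) → ℝ≥0∞) : Prop :=
  ∑' m : ℕ, ((m : ℝ≥0∞) + 2) *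
    ∫⁻ v : Fin (m + 2) → S, κ m v ∂(Measure.pi fun _ => μ) ≠ ⊤

/-- `expNeg a = e^{-a}` for `a ∈ [0,∞]`, with `e^{-∞} = 0`. -/
noncomputable def expNeg (a : ℝ≥0∞) : ℝ := if a = ⊤ then 0 else Real.exp (-a.toReal)

/-- The operator `Φ_κ(f) = 1 - e^{-S_κ(f)}`. -/
noncomputable def Phi {S : Type*} [MeasurableSpace S] (μ : Measure S)
    (κ : (m : ℕ) → (Fin (m + 2) → S) → ℝ≥0∞) (f : S → ℝ) (x : S) : ℝ :=
  1 - expNeg (Sop μ κ f x)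

/-- Irreducibility of the hyperkernel. -/
def HyperkernelIrreducible {S : Type*} [MeasurableSpace S] (μ : Measure S)
    (κ : (m : ℕ) → (Fin (m + 2) → S) → ℝ≥0∞) : Prop :=
  ∀ A : Set S, MeasurableSet A →
    (∀ᵐ p ∂(μ.prod μ), p ∈ A ×ˢ Aᶜ → edgeKernel μ κ p.1 p.2 = 0) →
    μ A = 0 ∨ μ Aᶜ = 0

/-- The decreasing iterates `ρ_0 = 1`, `ρ_{t+1} = Φ_κ(ρ_t)`. -/
noncomputable def rhoSeq {S : Type*} [MeasurableSpace S] (μ : Measure S)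
    (κ : (m : ℕ) → (Fin (m + 2) → S) → ℝ≥0∞) : ℕ → S → ℝ
  | 0 => fun _ => 1
  | t + 1 => Phi μ κ (rhoSeq μ κ t)

/-- The pointwise limit `ρ_κ` of the decreasing iterates `Φ_κ^t(1)`. -/
noncomputable def rhoFun {S : Type*} [MeasurableSpace S] (μ : Measure S)
    (κ : (m : ℕ) → (Fin (m + 2) → S) → ℝ≥0∞) : S → ℝ :=
  fun x => ⨅ t : ℕ, rhoSeq μ κ t x

/-- The condition `‖T_κ‖ > 1` on the `L²(μ)` operator norm of `T_κ`. -/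
def TopNormGtOne {S : Type*} [MeasurableSpace S] (μ : Measure S)
    (κ : (m : ℕ) → (Fin (m + 2) → S) → ℝ≥0∞) : Prop :=
  ∃ h : S → ℝ, Measurable h ∧ (∀ x, 0 ≤ h x) ∧
    (∫⁻ x, ENNReal.ofReal (h x) ^ 2 ∂μ) ≤ 1 ∧ 1 < ∫⁻ x, (Tlin μ κ h x) ^ 2 ∂μ
namespace Stmt8Aux

open MeasureTheory ENNReal Filter Topology

/-! ### Real / product lemmas -/

lemma scale_prod {ι : Type*} (s : Finset ι) (a : ι → ℝ) (ha : ∀ i, 0 ≤ a i ∧ a i ≤ 1)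
    {ε : ℝ} (hε0 : 0 ≤ ε) (hε1 : ε ≤ 1) :
    ε * (1 - ∏ i ∈ s, (1 - a i)) ≤ 1 - ∏ i ∈ s, (1 - ε * a i) := by
  induction s using Finset.cons_induction with
  | empty => simp
  | cons j s hj ih =>
    rw [Finset.prod_cons, Finset.prod_cons]
    set P := ∏ i ∈ s, (1 - ε * a i) with hP
    set Q := ∏ i ∈ s, (1 - a i) with hQ
    have hQ0 : 0 ≤ Q := Finset.prod_nonneg fun i _ => by linarith [(ha i).2]
    have hQP : Q ≤ P := Finset.prod_le_prod (fun i _ => by linarith [(ha i).2])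
      (fun i _ => by nlinarith [(ha i).1, (ha i).2])
    have hm : ε * a j * Q ≤ ε * a j * P :=
      mul_le_mul_of_nonneg_left hQP (mul_nonneg hε0 (ha j).1)
    nlinarith [ih]

lemma prod_one_sub_nonneg {n : ℕ} {a : Fin n → ℝ} (h1 : ∀ i, a i ≤ 1) :
    0 ≤ ∏ i, (1 - a i) :=
  Finset.prod_nonneg fun i _ => by linarith [h1 i]

lemma prod_one_sub_le_one {n : ℕ} {a : Fin n → ℝ} (h0 : ∀ i, 0 ≤ a i) (h1 : ∀ i, a i ≤ 1) :
    ∏ i, (1 - a i) ≤ 1 :=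
  Finset.prod_le_one (fun i _ => by linarith [h1 i]) (fun i _ => by linarith [h0 i])

lemma prod_one_sub_anti {n : ℕ} {a b : Fin n → ℝ} (hab : ∀ i, a i ≤ b i) (hb1 : ∀ i, b i ≤ 1) :
    ∏ i, (1 - b i) ≤ ∏ i, (1 - a i) :=
  Finset.prod_le_prod (fun i _ => by linarith [hb1 i]) (fun i _ => by linarith [hab i])

lemma key_real {δ u : ℝ} (hδ : 0 < δ) (hu : 0 ≤ u) (hle : (1 + δ) * u ≤ δ) :
    u ≤ 1 - Real.exp (-((1 + δ) * u)) := by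
  set v := (1 + δ) * u with hv
  have hv0 : 0 ≤ v := by positivity
  have h1 : v + 1 ≤ Real.exp v := Real.add_one_le_exp v
  have h2 : Real.exp (-v) = (Real.exp v)⁻¹ := Real.exp_neg v
  have h3 : (0:ℝ) < Real.exp v := Real.exp_pos v
  have h4 : Real.exp (-v) ≤ (1 + v)⁻¹ := by
    rw [h2]
    apply inv_anti₀ (by linarith) (by linarith)
  have h5 : (1 + v)⁻¹ ≤ 1 - u := by
    rw [inv_le_iff_one_le_mul₀ (by linarith)]
    nlinarith
  linarith

/-! ### expNeg lemmas -/

lemma expNeg_nonneg (a : ℝ≥0∞) : 0 ≤ expNeg a := by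
  unfold expNeg; split <;> [rfl; positivity]

lemma expNeg_le_one (a : ℝ≥0∞) : expNeg a ≤ 1 := by
  unfold expNeg; split
  · norm_num
  · rw [Real.exp_le_one_iff]; simp [ENNReal.toReal_nonneg]

lemma expNeg_anti {a b : ℝ≥0∞} (h : a ≤ b) : expNeg b ≤ expNeg a := by
  unfold expNeg
  by_cases hb : b = ⊤
  · simp [hb, expNeg_nonneg]
    split <;> [rfl; positivity]
  · have ha : a ≠ ⊤ := fun h' => hb (top_le_iff.1 (h' ▸ h))
    rw [if_neg ha, if_neg hb]
    exact Real.exp_le_exp.2 (neg_le_neg ((ENNReal.toReal_le_toReal ha hb).2 h))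

lemma expNeg_ofReal {v : ℝ} (hv : 0 ≤ v) : expNeg (ENNReal.ofReal v) = Real.exp (-v) := by
  rw [expNeg, if_neg ENNReal.ofReal_ne_top, ENNReal.toReal_ofReal hv]

lemma measurable_expNeg : Measurable expNeg := by
  unfold expNeg
  exact Measurable.ite (MeasurableSet.singleton ⊤)
    measurable_const
    (Real.measurable_exp.comp (ENNReal.measurable_toReal.neg))

lemma tendsto_expNeg_iSup {a : ℕ → ℝ≥0∞} (ha : Monotone a) :
    Tendsto (fun t => expNeg (a t)) atTop (𝓝 (expNeg (⨆ t, a t))) := by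
  by_cases hs : (⨆ t, a t) = ⊤
  · rw [hs]
    have : expNeg ⊤ = 0 := by simp [expNeg]
    rw [this]
    by_cases hft : ∃ N, a N = ⊤
    · obtain ⟨N, hN⟩ := hft
      apply tendsto_const_nhds.congr'
      filter_upwards [eventually_ge_atTop N] with t ht
      have : a t = ⊤ := top_le_iff.1 (hN ▸ ha ht)
      simp [expNeg, this]
    · push_neg at hft
      have htr : Tendsto (fun t => (a t).toReal) atTop atTop := by
        rw [tendsto_atTop_atTop]
        intro M
        have hlt : ENNReal.ofReal M < ⨆ t, a t := hs ▸ ENNReal.ofReal_lt_top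
        obtain ⟨N, hN⟩ := lt_iSup_iff.1 hlt
        refine ⟨N, fun t ht => ?_⟩
        have h1 : ENNReal.ofReal M ≤ a t := le_trans hN.le (ha ht)
        calc M ≤ (ENNReal.ofReal M).toReal := by
                  rcases le_or_gt 0 M with hM | hM
                  · rw [ENNReal.toReal_ofReal hM]
                  · exact hM.le.trans ENNReal.toReal_nonneg
          _ ≤ (a t).toReal := (ENNReal.toReal_le_toReal ENNReal.ofReal_ne_top (hft t)).2 h1
      have h0 : Tendsto (fun t => Real.exp (-(a t).toReal)) atTop (𝓝 0) :=
        Real.tendsto_exp_atBot.comp (tendsto_neg_atTop_atBot.comp htr)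
      apply h0.congr
      intro t
      simp [expNeg, hft t]
  · have hfin : ∀ t, a t ≠ ⊤ := fun t h =>
      hs (top_le_iff.1 (h ▸ le_iSup a t))
    have h1 : Tendsto a atTop (𝓝 (⨆ t, a t)) := tendsto_atTop_iSup ha
    have h2 : Tendsto (fun t => (a t).toReal) atTop (𝓝 (⨆ t, a t).toReal) :=
      (ENNReal.tendsto_toReal hs).comp h1
    have h3 : Tendsto (fun t => Real.exp (-(a t).toReal)) atTop
        (𝓝 (Real.exp (-(⨆ t, a t).toReal))) :=
      (Real.continuous_exp.tendsto _).comp (h2.neg)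
    have e1 : expNeg (⨆ t, a t) = Real.exp (-(⨆ t, a t).toReal) := by
      rw [expNeg, if_neg hs]
    rw [e1]
    apply h3.congr
    intro t
    rw [expNeg, if_neg (hfin t)]

end Stmt8Aux
namespace Stmt8Aux

open MeasureTheory ENNReal Filter Topology

lemma tsum_iSup_nat {b : ℕ → ℕ → ℝ≥0∞} (hb : ∀ m, Monotone (b m)) :
    ∑' m, ⨆ t, b m t = ⨆ t, ∑' m, b m t := by
  have h1 : ∑' m, ⨆ t, b m t = ∫⁻ m, ⨆ t, b m t ∂Measure.count := (lintegral_count _).symm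
  rw [h1, lintegral_iSup (fun t => measurable_from_nat) (fun s t hst m => hb m hst)]
  simp_rw [lintegral_count]

variable {S : Type*} [MeasurableSpace S] {μ : Measure S} [IsProbabilityMeasure μ]
  {κ : (m : ℕ) → (Fin (m + 2) → S) → ℝ≥0∞}

lemma measurable_cons {m : ℕ} :
    Measurable (fun p : S × (Fin (m + 1) → S) => (Fin.cons p.1 p.2 : Fin (m + 2) → S)) := by
  rw [measurable_pi_iff]
  intro i
  induction i using Fin.cases with
  | zero => simpa using measurable_fst
  | succ j => simp only [Fin.cons_succ]; exact (measurable_pi_apply j).comp measurable_snd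

lemma measurable_prod_term {m : ℕ} {f : S → ℝ} (hf : Measurable f) :
    Measurable (fun y : Fin (m + 1) → S => ENNReal.ofReal (1 - ∏ i, (1 - f (y i)))) := by
  apply ENNReal.measurable_ofReal.comp
  apply Measurable.sub measurable_const
  exact Finset.measurable_prod _ fun i _ =>
    Measurable.sub measurable_const (hf.comp (measurable_pi_apply i))

lemma measurable_inner {m : ℕ} {f : S → ℝ} (hκ : HyperkernelMeasurable κ)
    (hf : Measurable f) (x : S) :
    Measurable (fun y : Fin (m + 1) → S =>
      κ m (Fin.cons x y) * ENNReal.ofReal (1 - ∏ i, (1 - f (y i)))) :=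
  ((hκ m).comp (measurable_cons.comp (measurable_const.prodMk measurable_id))).mul
    (measurable_prod_term hf)

lemma measurable_Sop (hκ : HyperkernelMeasurable κ) {f : S → ℝ} (hf : Measurable f) :
    Measurable (Sop μ κ f) := by
  apply Measurable.ennreal_tsum
  intro m
  apply Measurable.const_mul
  exact Measurable.lintegral_prod_right'
    (f := fun p : S × (Fin (m + 1) → S) =>
      κ m (Fin.cons p.1 p.2) * ENNReal.ofReal (1 - ∏ i, (1 - f (p.2 i))))
    (((hκ m).comp measurable_cons).mul ((measurable_prod_term hf).comp measurable_snd))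

lemma measurable_Phi (hκ : HyperkernelMeasurable κ) {f : S → ℝ} (hf : Measurable f) :
    Measurable (Phi μ κ f) :=
  measurable_const.sub (measurable_expNeg.comp (measurable_Sop hκ hf))

omit [IsProbabilityMeasure μ] in
lemma Phi_nonneg (f : S → ℝ) (x : S) : 0 ≤ Phi μ κ f x := by
  have := expNeg_le_one (Sop μ κ f x); unfold Phi; linarith

omit [IsProbabilityMeasure μ] in
lemma Phi_le_one (f : S → ℝ) (x : S) : Phi μ κ f x ≤ 1 := by
  have := expNeg_nonneg (Sop μ κ f x); unfold Phi; linarith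

omit [IsProbabilityMeasure μ] in
lemma Sop_mono {f g : S → ℝ} (hfg : ∀ x, f x ≤ g x)
    (hg1 : ∀ x, g x ≤ 1) (x : S) : Sop μ κ f x ≤ Sop μ κ g x := by
  refine ENNReal.tsum_le_tsum fun m => ?_
  refine mul_le_mul_right (lintegral_mono fun y => mul_le_mul_right ?_ _) _
  apply ENNReal.ofReal_le_ofReal
  have := prod_one_sub_anti (a := fun i => f (y i)) (b := fun i => g (y i))
    (fun i => hfg (y i)) (fun i => hg1 (y i))
  linarith

omit [IsProbabilityMeasure μ] in
lemma Phi_mono {f g : S → ℝ} (hfg : ∀ x, f x ≤ g x)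
    (hg1 : ∀ x, g x ≤ 1) (x : S) : Phi μ κ f x ≤ Phi μ κ g x := by
  have := expNeg_anti (Sop_mono (μ := μ) (κ := κ) hfg hg1 x)
  unfold Phi; linarith

omit [IsProbabilityMeasure μ] in
/-- Continuity of `Sop` along monotone pointwise limits. -/
lemma Sop_iSup (hκ : HyperkernelMeasurable κ) {g : ℕ → S → ℝ}
    (hgm : ∀ t, Measurable (g t)) (hmono : ∀ x, Monotone fun t => g t x)
    (hg1 : ∀ t x, g t x ≤ 1)
    {G : S → ℝ} (hG : ∀ x, Tendsto (fun t => g t x) atTop (𝓝 (G x))) (x : S) :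
    Sop μ κ G x = ⨆ t, Sop μ κ (g t) x := by
  have hmono' : ∀ (m : ℕ) (y : Fin (m + 1) → S), Monotone fun t =>
      ENNReal.ofReal (1 - ∏ i, (1 - g t (y i))) := by
    intro m y s t hst
    apply ENNReal.ofReal_le_ofReal
    have := prod_one_sub_anti (a := fun i => g s (y i)) (b := fun i => g t (y i))
      (fun i => hmono (y i) hst) (fun i => hg1 t (y i))
    linarith
  have hc : ∀ (m : ℕ) (y : Fin (m + 1) → S),
      (⨆ t, ENNReal.ofReal (1 - ∏ i, (1 - g t (y i))))
        = ENNReal.ofReal (1 - ∏ i, (1 - G (y i))) := by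
    intro m y
    refine tendsto_nhds_unique (tendsto_atTop_iSup (hmono' m y)) ?_
    apply (ENNReal.continuous_ofReal.tendsto _).comp
    apply Tendsto.const_sub
    exact tendsto_finset_prod _ fun i _ => Tendsto.const_sub _ (hG (y i))
  have hint : ∀ m : ℕ,
      (∫⁻ y : Fin (m + 1) → S, κ m (Fin.cons x y)
          * ENNReal.ofReal (1 - ∏ i, (1 - G (y i))) ∂(Measure.pi fun _ => μ))
      = ⨆ t, ∫⁻ y : Fin (m + 1) → S, κ m (Fin.cons x y)
          * ENNReal.ofReal (1 - ∏ i, (1 - g t (y i))) ∂(Measure.pi fun _ => μ) := by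
    intro m
    rw [← lintegral_iSup (fun t => measurable_inner hκ (hgm t) x)
      (fun s t hst y => mul_le_mul_right (hmono' m y hst) _)]
    congr 1
    ext y
    rw [← ENNReal.mul_iSup, hc m y]
  unfold Sop
  calc ∑' m : ℕ, ((m : ℝ≥0∞) + 2) * ∫⁻ y : Fin (m + 1) → S, κ m (Fin.cons x y)
          * ENNReal.ofReal (1 - ∏ i, (1 - G (y i))) ∂(Measure.pi fun _ => μ)
      = ∑' m : ℕ, ⨆ t, ((m : ℝ≥0∞) + 2) * ∫⁻ y : Fin (m + 1) → S, κ m (Fin.cons x y)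
          * ENNReal.ofReal (1 - ∏ i, (1 - g t (y i))) ∂(Measure.pi fun _ => μ) := by
        refine tsum_congr fun m => ?_
        rw [hint m, ENNReal.mul_iSup]
    _ = ⨆ t, ∑' m : ℕ, ((m : ℝ≥0∞) + 2) * ∫⁻ y : Fin (m + 1) → S, κ m (Fin.cons x y)
          * ENNReal.ofReal (1 - ∏ i, (1 - g t (y i))) ∂(Measure.pi fun _ => μ) := by
        apply tsum_iSup_nat
        intro m s t hst
        exact mul_le_mul_right (lintegral_mono fun y => mul_le_mul_right (hmono' m y hst) _) _

end Stmt8Aux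
/-- Lemma 2.8, `l_fup`, of the paper.
If there are `δ > 0` and a measurable `f : S → [0,1]` with `μ{f > 0} > 0` and
`S_κ(f) ≥ (1 + δ)·f` pointwise, then `Φ_κ` has a fixed point `g : S → [0,1]` with
`∫ g dμ > 0` (i.e. `ρ(κ) > 0`). -/
theorem stmt8 {S : Type*} [MeasurableSpace S] (μ : Measure S) [IsProbabilityMeasure μ]
    (κ : (m : ℕ) → (Fin (m + 2) → S) → ℝ≥0∞)
    (hmeas : HyperkernelMeasurable κ) (hsymm : HyperkernelSymm κ)
    (hint : HyperkernelIntegrable μ κ)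
    (δ : ℝ) (hδ : 0 < δ)
    (f : S → ℝ) (hf : Measurable f) (hf01 : ∀ x, 0 ≤ f x ∧ f x ≤ 1)
    (hpos : 0 < μ {x | 0 < f x})
    (hgrow : ∀ x, ENNReal.ofReal ((1 + δ) * f x) ≤ Sop μ κ f x) :
    ∃ g : S → ℝ, Measurable g ∧ (∀ x, 0 ≤ g x ∧ g x ≤ 1) ∧
      (∀ x, Phi μ κ g x = g x) ∧ 0 < ∫⁻ x, ENNReal.ofReal (g x) ∂μ := by
  classical
  have hδ1 : (0:ℝ) < 1 + δ := by linarith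
  set ε : ℝ := δ / (1 + δ) with hεdef
  have hε0 : 0 < ε := div_pos hδ hδ1
  have hε1 : ε < 1 := by rw [hεdef, div_lt_one hδ1]; linarith
  set h : S → ℝ := fun x => ε * f x with hhdef
  have hhm : Measurable h := hf.const_mul ε
  have hh0 : ∀ x, 0 ≤ h x := fun x => mul_nonneg hε0.le (hf01 x).1
  have hh1 : ∀ x, h x ≤ 1 := fun x => by
    have := (hf01 x).1; have := (hf01 x).2
    simp only [hhdef]; nlinarith
  -- Step A: `Φ(h) ≥ h`
  have hSh : ∀ x, ENNReal.ofReal ((1 + δ) * h x) ≤ Sop μ κ h x := by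
    intro x
    have key : ENNReal.ofReal ε * Sop μ κ f x ≤ Sop μ κ h x := by
      unfold Sop
      rw [← ENNReal.tsum_mul_left]
      refine ENNReal.tsum_le_tsum fun m => ?_
      rw [mul_left_comm]
      refine mul_le_mul_right ?_ _
      rw [← lintegral_const_mul' _ _ ENNReal.ofReal_ne_top]
      refine lintegral_mono fun y => ?_
      rw [mul_left_comm]
      refine mul_le_mul_right ?_ _
      rw [← ENNReal.ofReal_mul hε0.le]
      apply ENNReal.ofReal_le_ofReal
      have := Stmt8Aux.scale_prod (Finset.univ) (fun i => f (y i))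
        (fun i => hf01 (y i)) hε0.le hε1.le
      simpa [hhdef] using this
    have e : (1 + δ) * h x = ε * ((1 + δ) * f x) := by simp only [hhdef]; ring
    calc ENNReal.ofReal ((1 + δ) * h x)
        = ENNReal.ofReal ε * ENNReal.ofReal ((1 + δ) * f x) := by
          rw [e, ENNReal.ofReal_mul hε0.le]
      _ ≤ ENNReal.ofReal ε * Sop μ κ f x := mul_le_mul_right (hgrow x) _
      _ ≤ Sop μ κ h x := key
  have hPhih : ∀ x, h x ≤ Phi μ κ h x := by
    intro x
    have h1 : expNeg (Sop μ κ h x) ≤ expNeg (ENNReal.ofReal ((1 + δ) * h x)) :=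
      Stmt8Aux.expNeg_anti (hSh x)
    rw [Stmt8Aux.expNeg_ofReal (mul_nonneg hδ1.le (hh0 x))] at h1
    have h2 : (1 + δ) * h x ≤ δ := by
      have hxε : h x ≤ ε := by
        have := (hf01 x).2; have := (hf01 x).1
        simp only [hhdef]; nlinarith
      have : (1 + δ) * ε = δ := by rw [hεdef]; field_simp
      nlinarith
    have := Stmt8Aux.key_real hδ (hh0 x) h2
    unfold Phi
    linarith
  -- The increasing iterates of `Φ` starting from `h`
  let g : ℕ → S → ℝ := fun t => Nat.rec h (fun _ p => Phi μ κ p) t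
  have hgm : ∀ t, Measurable (g t) := by
    intro t; induction t with
    | zero => exact hhm
    | succ t ih => exact Stmt8Aux.measurable_Phi hmeas ih
  have hgb : ∀ t x, 0 ≤ g t x ∧ g t x ≤ 1 := by
    intro t; induction t with
    | zero => exact fun x => ⟨hh0 x, hh1 x⟩
    | succ t ih => exact fun x => ⟨Stmt8Aux.Phi_nonneg _ x, Stmt8Aux.Phi_le_one _ x⟩
  have hstep : ∀ t x, g t x ≤ g (t + 1) x := by
    intro t; induction t with
    | zero => exact hPhih
    | succ t ih => exact fun x => Stmt8Aux.Phi_mono ih (fun y => (hgb (t + 1) y).2) x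
  have hmono : ∀ x, Monotone fun t => g t x := fun x =>
    monotone_nat_of_le_succ (fun t => hstep t x)
  have hbdd : ∀ x, BddAbove (Set.range fun t => g t x) := fun x =>
    ⟨1, by rintro v ⟨t, rfl⟩; exact (hgb t x).2⟩
  set G : S → ℝ := fun x => ⨆ t, g t x with hGdef
  have hGten : ∀ x, Tendsto (fun t => g t x) atTop (𝓝 (G x)) := fun x =>
    tendsto_atTop_ciSup (hmono x) (hbdd x)
  have hGm : Measurable G :=
    measurable_of_tendsto_metrizable' atTop hgm (tendsto_pi_nhds.2 hGten)
  have hhG : ∀ x, h x ≤ G x := fun x => le_ciSup (hbdd x) 0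
  have hGb : ∀ x, 0 ≤ G x ∧ G x ≤ 1 := fun x =>
    ⟨le_trans (hh0 x) (hhG x), ciSup_le fun t => (hgb t x).2⟩
  have hfix : ∀ x, Phi μ κ G x = G x := by
    intro x
    have hS : Sop μ κ G x = ⨆ t, Sop μ κ (g t) x :=
      Stmt8Aux.Sop_iSup hmeas hgm hmono (fun t y => (hgb t y).2) hGten x
    have hSmono : Monotone fun t => Sop μ κ (g t) x := fun s t hst =>
      Stmt8Aux.Sop_mono (fun y => hmono y hst) (fun y => (hgb t y).2) x
    have h1 : Tendsto (fun t => expNeg (Sop μ κ (g t) x)) atTop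
        (𝓝 (expNeg (Sop μ κ G x))) := by
      rw [hS]; exact Stmt8Aux.tendsto_expNeg_iSup hSmono
    have h2 : Tendsto (fun t => Phi μ κ (g t) x) atTop (𝓝 (Phi μ κ G x)) := by
      unfold Phi
      exact tendsto_const_nhds.sub h1
    have h3 : Tendsto (fun t => g (t + 1) x) atTop (𝓝 (G x)) :=
      (hGten x).comp (tendsto_add_atTop_nat 1)
    exact tendsto_nhds_unique h2 h3
  refine ⟨G, hGm, hGb, hfix, ?_⟩
  have hpos' : 0 < ∫⁻ x, ENNReal.ofReal (h x) ∂μ := by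
    by_contra hcon
    push_neg at hcon
    have h0 : ∫⁻ x, ENNReal.ofReal (h x) ∂μ = 0 :=
      le_antisymm (by simpa using hcon) (zero_le)
    have hae : ∀ᵐ x ∂μ, ENNReal.ofReal (h x) = 0 :=
      (lintegral_eq_zero_iff (ENNReal.measurable_ofReal.comp hhm)).1 h0
    have hnull : μ {x | ¬ ENNReal.ofReal (h x) = 0} = 0 := ae_iff.1 hae
    have hsub : {x | 0 < f x} ⊆ {x | ¬ ENNReal.ofReal (h x) = 0} := by
      intro x hx
      simp only [Set.mem_setOf_eq, ENNReal.ofReal_eq_zero, not_le]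
      exact mul_pos hε0 hx
    exact absurd (measure_mono_null hsub hnull) hpos.ne'
  calc (0:ℝ≥0∞) < ∫⁻ x, ENNReal.ofReal (h x) ∂μ := hpos'
    _ ≤ ∫⁻ x, ENNReal.ofReal (G x) ∂μ :=
        lintegral_mono fun x => ENNReal.ofReal_le_ofReal (hhG x)
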